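/- Let Σ be a world function on Ω, let P = (P₀,…,Pₙ) and Q = (Q₀,…,Qₙ) be (n+1)-tuples of points of Ω, and let P′ be obtained from P by interchanging two entries P_k and P_l with 0 ≤ k < l ≤ n. Then the scalar Σ-product of nth order multivectors changes sign: (P′.Q) = −(P.Q) for every Q. -/
import Mathlib

open Matrix in
lemma aux_det_border {Ω : Type*} {n : ℕ} (g : Ω → Fin n → ℝ) (R : Fin (n + 1) → Ω) :
    Matrix.det (Matrix.of fun i j : Fin n => g (R 0) j - g (R i.succ) j) =
      (-1 : ℝ) ^ n * Matrix.det (Matrix.of fun i j : Fin (n + 1) =>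
        Fin.cases (1 : ℝ) (fun j' => g (R i) j') j) := by
  set B : Matrix (Fin (n+1)) (Fin (n+1)) ℝ :=
    Matrix.of fun i j => Fin.cases (1 : ℝ) (fun j' => g (R i) j') j with hB
  set B' : Matrix (Fin (n+1)) (Fin (n+1)) ℝ :=
    Matrix.of fun i j => B i j - (if i = 0 then 0 else 1) * B 0 j with hB'
  have h1 : B.det = B'.det := by
    apply Matrix.det_eq_of_forall_row_eq_smul_add_const
      (fun i => if i = 0 then 0 else 1) 0 (by simp)
    intro i j
    have : B' 0 j = B 0 j := by simp [hB']
    simp only [hB', Matrix.of_apply, this]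
    split_ifs <;> ring
  have h2 : B'.det = Matrix.det (Matrix.of fun i j : Fin n =>
      g (R i.succ) j - g (R 0) j) := by
    rw [Matrix.det_succ_column_zero]
    rw [Fin.sum_univ_succ]
    have hz : ∀ i : Fin n, B' i.succ 0 = 0 := by
      intro i; simp [hB', hB, Fin.succ_ne_zero]
    simp only [hz, mul_zero, zero_mul, Finset.sum_const_zero, add_zero]
    have h00 : B' 0 0 = 1 := by simp [hB', hB]
    rw [h00]
    simp only [Fin.val_zero, pow_zero, one_mul, mul_one]
    congr 1
    ext i j
    simp [hB', hB, Fin.succ_ne_zero, Matrix.submatrix, Fin.succAbove]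
  have h3 : Matrix.det (Matrix.of fun i j : Fin n => g (R i.succ) j - g (R 0) j)
      = (-1 : ℝ) ^ n * Matrix.det (Matrix.of fun i j : Fin n =>
        g (R 0) j - g (R i.succ) j) := by
    have : (Matrix.of fun i j : Fin n => g (R i.succ) j - g (R 0) j)
        = (-1 : ℝ) • (Matrix.of fun i j : Fin n => g (R 0) j - g (R i.succ) j) := by
      ext i j; simp
    rw [this, Matrix.det_smul]
    simp
  rw [h1, h2, h3, ← mul_assoc, ← pow_add, ← two_mul, pow_mul]
  norm_num

/-- the scalar Σ-product of nth order multivectors changes sign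
when two entries of the skeleton `P` are interchanged. -/
theorem multivector_product_antisymmetric_in_points
    {Ω : Type*} [Nonempty Ω]
    (W : Ω → Ω → ℝ) (hW : ∀ P, W P P = 0)
    (sp : Ω → Ω → Ω → Ω → ℝ)
    (hsp : ∀ P₀ P₁ Q₀ Q₁, sp P₀ P₁ Q₀ Q₁ =
      W P₀ Q₁ - W P₁ Q₁ - W P₀ Q₀ + W P₁ Q₀)
    (n : ℕ) (P Q : Fin (n + 1) → Ω) (a b : Fin (n + 1)) (hab : a < b) :
    Matrix.det (Matrix.of fun i j : Fin n =>
        sp ((P ∘ Equiv.swap a b) 0) ((P ∘ Equiv.swap a b) i.succ)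
           (Q 0) (Q j.succ)) =
      - Matrix.det (Matrix.of fun i j : Fin n =>
        sp (P 0) (P i.succ) (Q 0) (Q j.succ)) := by
  set g : Ω → Fin n → ℝ := fun x j => W x (Q j.succ) - W x (Q 0) with hg
  have hmat : ∀ R : Fin (n+1) → Ω, (Matrix.of fun i j : Fin n =>
      sp (R 0) (R i.succ) (Q 0) (Q j.succ)) =
      (Matrix.of fun i j : Fin n => g (R 0) j - g (R i.succ) j) := by
    intro R; ext i j; simp only [Matrix.of_apply, hsp, hg]; ring
  rw [hmat, hmat, aux_det_border, aux_det_border]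
  have hperm : (Matrix.of fun i j : Fin (n + 1) =>
      Fin.cases (motive := fun _ => ℝ) 1 (fun j' => g ((P ∘ Equiv.swap a b) i) j') j) =
      (Matrix.of fun i j : Fin (n + 1) =>
        Fin.cases (motive := fun _ => ℝ) 1 (fun j' => g (P i) j') j).submatrix (Equiv.swap a b) id := by
    ext i j; rfl
  rw [hperm, Matrix.det_permute, Equiv.Perm.sign_swap hab.ne]
  push_cast
  ring
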